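/- Assume φ:[0,∞)→[0,∞) is measurable with Λ = ∫₀^∞ φ(s) ds ∈ (1,∞], φ has locally finite variation and its total variation on [0,t] is at most C(1+t)^p for some constants C,p>0 and all t≥0; let α₀ be the unique positive real with ∫₀^∞ e^{−α₀ t} φ(t) dt = 1. If (η_n)_{n≥1} is a real sequence with lim_{n→∞} η_n = 0, then lim_{t→∞} e^{−α₀ t} ∑_{n≥1} η_n ∫₀ᵗ φ^{⋆n}(t−s) e^{α₀ s/2} ds = 0. -/

import Mathlib

open MeasureTheory Set Filter Topology intervalIntegral
open scoped ENNReal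

/-- Convolution powers: `convPow φ n = φ^{⋆(n+1)}`, where `φ^{⋆1} = φ` and
`φ^{⋆(n+1)} = φ^{⋆n} ⋆ φ` with `(f ⋆ g) t = ∫₀ᵗ f s * g (t - s) ds`. -/
noncomputable def convPow (φ : ℝ → ℝ) : ℕ → ℝ → ℝ
  | 0 => φ
  | n + 1 => fun t => ∫ s in (0:ℝ)..t, convPow φ n s * φ (t - s)

namespace Stmt9Aux

/-- ENNReal convolution on ℝ. -/
noncomputable def cv (f g : ℝ → ℝ≥0∞) : ℝ → ℝ≥0∞ := fun u => ∫⁻ x, f x * g (u - x)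

lemma cv_prod_meas {f g : ℝ → ℝ≥0∞} (hf : Measurable f) (hg : Measurable g) :
    Measurable fun p : ℝ × ℝ => f p.2 * g (p.1 - p.2) := by fun_prop

lemma cv_measurable {f g : ℝ → ℝ≥0∞} (hf : Measurable f) (hg : Measurable g) :
    Measurable (cv f g) :=
  (cv_prod_meas hf hg).lintegral_prod_right'

lemma cv_lintegral {f g : ℝ → ℝ≥0∞} (hf : Measurable f) (hg : Measurable g) :
    ∫⁻ u, cv f g u = (∫⁻ x, f x) * (∫⁻ x, g x) := by
  simp only [cv]
  rw [lintegral_lintegral_swap (cv_prod_meas hf hg).aemeasurable]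
  have h1 : ∀ x : ℝ, ∫⁻ u, f x * g (u - x) = f x * ∫⁻ y, g y := by
    intro x
    rw [lintegral_const_mul _ (by fun_prop : Measurable fun u : ℝ => g (u - x))]
    congr 1
    have := lintegral_add_right_eq_self (μ := (volume : Measure ℝ)) g (-x)
    simpa [sub_eq_add_neg] using this
  simp_rw [h1]
  rw [lintegral_mul_const _ hf]

lemma cv_supp {a : ℝ} {f g : ℝ → ℝ≥0∞} (hf : ∀ x ≤ a, f x = 0) (hg : ∀ x ≤ 0, g x = 0) :
    ∀ u ≤ a, cv f g u = 0 := by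
  intro u hu
  have h0 : ∀ x, f x * g (u - x) = 0 := by
    intro x
    rcases le_or_gt x a with h | h
    · rw [hf x h, zero_mul]
    · rw [hg (u - x) (by linarith), mul_zero]
  simp only [cv, h0, lintegral_zero]

lemma cv_assoc {f g h : ℝ → ℝ≥0∞} (hf : Measurable f) (hg : Measurable g)
    (hh : Measurable h) : cv (cv f g) h = cv f (cv g h) := by
  funext u
  have meas2 : Measurable fun p : ℝ × ℝ => f p.2 * g (p.1 - p.2) * h (u - p.1) := by fun_prop
  calc cv (cv f g) h u
      = ∫⁻ x, ∫⁻ y, f y * g (x - y) * h (u - x) := by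
        simp only [cv]
        congr 1; funext x
        rw [lintegral_mul_const _ (by fun_prop : Measurable fun y : ℝ => f y * g (x - y))]
    _ = ∫⁻ y, ∫⁻ x, f y * g (x - y) * h (u - x) :=
        lintegral_lintegral_swap meas2.aemeasurable
    _ = ∫⁻ y, f y * cv g h (u - y) := by
        congr 1; funext y
        have e0 : ∀ x, f y * g (x - y) * h (u - x) = f y * (g (x - y) * h (u - x)) := by
          intro x; ring
        simp_rw [e0]
        rw [lintegral_const_mul _ (by fun_prop : Measurable fun x : ℝ => g (x - y) * h (u - x))]
        congr 1
        have := lintegral_add_right_eq_self (μ := (volume : Measure ℝ))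
          (fun x => g (x - y) * h (u - x)) y
        rw [← this]
        simp only [cv]
        congr 1; funext x
        have e1 : x + y - y = x := by ring
        have e2 : u - (x + y) = u - y - x := by ring
        rw [e1, e2]
    _ = cv f (cv g h) u := rfl

lemma cv_add_left {f g h : ℝ → ℝ≥0∞} (hf : Measurable f) (hg : Measurable g)
    (hh : Measurable h) : cv (fun x => f x + g x) h = fun u => cv f h u + cv g h u := by
  funext u
  simp only [cv, add_mul]
  rw [lintegral_add_left (by fun_prop : Measurable fun x : ℝ => f x * h (u - x))]



/-- convolution powers of an ENNReal kernel: `fpow ψ n = ψ^{⋆(n+1)}`. -/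
noncomputable def fpow (ψ : ℝ → ℝ≥0∞) : ℕ → ℝ → ℝ≥0∞
  | 0 => ψ
  | n + 1 => cv (fpow ψ n) ψ

noncomputable def rr (ψ : ℝ → ℝ≥0∞) (a : ℝ) : ℕ → ℝ → ℝ≥0∞
  | 0 => (Iic a).indicator ψ
  | n + 1 => (Iic a).indicator (cv (rr ψ a n) ψ)

noncomputable def bb (ψ : ℝ → ℝ≥0∞) (a : ℝ) : ℕ → ℝ → ℝ≥0∞
  | 0 => (Ioi a).indicator ψ
  | n + 1 => (Ioi a).indicator (cv (rr ψ a n) ψ)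

noncomputable def ee (ψ : ℝ → ℝ≥0∞) (a : ℝ) (j : ℕ) : ℕ → ℝ → ℝ≥0∞
  | 0 => bb ψ a j
  | k + 1 => cv (ee ψ a j k) ψ

section renewal

variable {ψ : ℝ → ℝ≥0∞} (hm : Measurable ψ) (hsupp : ∀ x ≤ 0, ψ x = 0)

include hm

lemma fpow_meas : ∀ n, Measurable (fpow ψ n)
  | 0 => hm
  | n + 1 => cv_measurable (fpow_meas n) hm

lemma rr_meas (a : ℝ) : ∀ n, Measurable (rr ψ a n)
  | 0 => hm.indicator measurableSet_Iic
  | n + 1 => (cv_measurable (rr_meas a n) hm).indicator measurableSet_Iic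

lemma bb_meas (a : ℝ) : ∀ n, Measurable (bb ψ a n)
  | 0 => hm.indicator measurableSet_Ioi
  | n + 1 => (cv_measurable (rr_meas hm a n) hm).indicator measurableSet_Ioi

lemma ee_meas (a : ℝ) (j : ℕ) : ∀ k, Measurable (ee ψ a j k)
  | 0 => bb_meas hm a j
  | k + 1 => cv_measurable (ee_meas a j k) hm

include hsupp

omit hm in
lemma fpow_supp : ∀ n, ∀ x ≤ 0, fpow ψ n x = 0
  | 0 => hsupp
  | n + 1 => cv_supp (fpow_supp n) hsupp

omit hsupp in
lemma fpow_mass (hmass : ∫⁻ x, ψ x = 1) : ∀ n, ∫⁻ x, fpow ψ n x = 1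
  | 0 => hmass
  | n + 1 => by
      rw [fpow, cv_lintegral (fpow_meas hm n) hm, fpow_mass hmass n, hmass, one_mul]

omit hm hsupp in
lemma bb_supp (a : ℝ) : ∀ n, ∀ x ≤ a, bb ψ a n x = 0 := by
  intro n x hx
  cases n <;> exact Set.indicator_of_notMem (by simpa using hx) _

lemma ee_supp (a : ℝ) (j : ℕ) : ∀ k, ∀ x ≤ a, ee ψ a j k x = 0
  | 0 => bb_supp a j
  | k + 1 => cv_supp (ee_supp a j k) hsupp

omit hsupp in
lemma ee_eq (a : ℝ) (j : ℕ) : ∀ k, ee ψ a j (k + 1) = cv (bb ψ a j) (fpow ψ k)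
  | 0 => rfl
  | k + 1 => by
      show cv (ee ψ a j (k+1)) ψ = _
      rw [ee_eq a j k, cv_assoc (bb_meas hm a j) (fpow_meas hm k) hm]
      rfl

omit hm hsupp in
/-- pointwise indicator split -/
lemma indicator_split (a : ℝ) (v : ℝ → ℝ≥0∞) (u : ℝ) :
    (Iic a).indicator v u + (Ioi a).indicator v u = v u := by
  rcases le_or_gt u a with h | h
  · simp [Set.indicator_apply, Set.mem_Iic, Set.mem_Ioi, h, not_lt.2 h]
  · simp [Set.indicator_apply, Set.mem_Iic, Set.mem_Ioi, h, not_le.2 h]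

lemma decomp (a : ℝ) : ∀ n, fpow ψ n =
    fun u => rr ψ a n u + ∑ j ∈ Finset.range (n + 1), ee ψ a j (n - j) u := by
  intro n
  induction n with
  | zero =>
      funext u
      simpa [fpow, rr, ee, bb] using (indicator_split a ψ u).symm
  | succ n ih =>
      funext u
      have : fpow ψ (n+1) = cv (fun u => rr ψ a n u +
          ∑ j ∈ Finset.range (n + 1), ee ψ a j (n - j) u) ψ := by
        show cv (fpow ψ n) ψ = _
        rw [← ih]
      rw [this]
      clear this
      have hsum : Measurable fun u => ∑ j ∈ Finset.range (n + 1), ee ψ a j (n - j) u :=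
        Finset.measurable_sum _ fun j _ => ee_meas hm a j (n - j)
      rw [cv_add_left (rr_meas hm a n) hsum hm]
      dsimp only
      have h1 : cv (rr ψ a n) ψ u = rr ψ a (n+1) u + bb ψ a (n+1) u :=
        (indicator_split a _ u).symm
      have h2 : cv (fun u => ∑ j ∈ Finset.range (n + 1), ee ψ a j (n - j) u) ψ u
          = ∑ j ∈ Finset.range (n + 1), ee ψ a j (n + 1 - j) u := by
        have : cv (fun u => ∑ j ∈ Finset.range (n + 1), ee ψ a j (n - j) u) ψ u
            = ∑ j ∈ Finset.range (n + 1), cv (ee ψ a j (n - j)) ψ u := by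
          simp only [cv, Finset.sum_mul]
          rw [lintegral_finset_sum]
          intro j _
          exact (ee_meas hm a j (n-j)).mul (hm.comp (by fun_prop))
        rw [this]
        refine Finset.sum_congr rfl fun j hj => ?_
        have hj' : j ≤ n := by simpa [Nat.lt_succ_iff] using hj
        have : n - j + 1 = n + 1 - j := by omega
        show ee ψ a j (n - j + 1) u = _
        rw [this]
      rw [h1, h2]
      conv_rhs => rw [Finset.sum_range_succ]
      have : ee ψ a (n+1) (n + 1 - (n+1)) u = bb ψ a (n+1) u := by
        simp [ee]
      rw [this]
      ring

omit hsupp in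
lemma lintegral_split (a : ℝ) {v : ℝ → ℝ≥0∞} (hv : Measurable v) :
    (∫⁻ x, (Iic a).indicator v x) + (∫⁻ x, (Ioi a).indicator v x) = ∫⁻ x, v x := by
  rw [← lintegral_add_left (hv.indicator measurableSet_Iic)]
  exact lintegral_congr (indicator_split a v)

omit hsupp in
lemma mass_claim (hmass : ∫⁻ x, ψ x = 1) (a : ℝ) :
    ∀ J, (∫⁻ x, rr ψ a J x) + ∑ j ∈ Finset.range (J + 1), (∫⁻ x, bb ψ a j x) = 1 := by
  intro J
  induction J with
  | zero =>
      have h0 := lintegral_split hm a hm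
      rw [hmass] at h0
      simpa [rr, bb] using h0
  | succ J ih =>
      have key : (∫⁻ x, rr ψ a (J+1) x) + (∫⁻ x, bb ψ a (J+1) x) = ∫⁻ x, rr ψ a J x := by
        have : (∫⁻ x, rr ψ a (J+1) x) + (∫⁻ x, bb ψ a (J+1) x) = ∫⁻ x, cv (rr ψ a J) ψ x :=
          lintegral_split hm a (cv_measurable (rr_meas hm a J) hm)
        rw [this, cv_lintegral (rr_meas hm a J) hm, hmass, mul_one]
      calc (∫⁻ x, rr ψ a (J+1) x) + ∑ j ∈ Finset.range (J + 2), (∫⁻ x, bb ψ a j x)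
          = (∫⁻ x, rr ψ a (J+1) x) + ((∑ j ∈ Finset.range (J + 1), ∫⁻ x, bb ψ a j x)
              + ∫⁻ x, bb ψ a (J+1) x) := by rw [Finset.sum_range_succ]
        _ = ((∫⁻ x, rr ψ a (J+1) x) + (∫⁻ x, bb ψ a (J+1) x))
              + ∑ j ∈ Finset.range (J + 1), ∫⁻ x, bb ψ a j x := by ring
        _ = (∫⁻ x, rr ψ a J x) + ∑ j ∈ Finset.range (J + 1), ∫⁻ x, bb ψ a j x := by rw [key]
        _ = 1 := ih

omit hsupp in
lemma bb_tsum_le (hmass : ∫⁻ x, ψ x = 1) (a : ℝ) :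
    ∑' j, (∫⁻ x, bb ψ a j x) ≤ 1 := by
  rw [ENNReal.tsum_eq_iSup_sum]
  refine iSup_le fun s => ?_
  obtain ⟨J, hJ⟩ : ∃ J, s ⊆ Finset.range (J + 1) :=
    ⟨s.sup id, fun i hi => Finset.mem_range.2 (Nat.lt_succ_of_le (Finset.le_sup (f := id) hi))⟩
  calc ∑ j ∈ s, (∫⁻ x, bb ψ a j x)
      ≤ ∑ j ∈ Finset.range (J + 1), (∫⁻ x, bb ψ a j x) :=
        Finset.sum_le_sum_of_subset hJ
    _ ≤ 1 := by
        rw [← mass_claim hm hmass a J]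
        exact le_add_self

omit hm hsupp in
lemma cv_strip {S : Set ℝ} (hS : MeasurableSet S) {h g : ℝ → ℝ≥0∞}
    (hh : Measurable h) (hg : Measurable g) :
    ∫⁻ u in S, cv h g u = ∫⁻ x, h x * ∫⁻ y, S.indicator (1 : ℝ → ℝ≥0∞) (y + x) * g y := by
  have step0 : ∀ u, S.indicator (cv h g) u
      = ∫⁻ x, S.indicator (1 : ℝ → ℝ≥0∞) u * (h x * g (u - x)) := by
    intro u
    by_cases hu : u ∈ S
    · simp only [Set.indicator_of_mem hu, Pi.one_apply, one_mul]; rfl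
    · simp [Set.indicator_of_notMem hu]
  have measp : Measurable fun p : ℝ × ℝ =>
      S.indicator (1 : ℝ → ℝ≥0∞) p.1 * (h p.2 * g (p.1 - p.2)) :=
    ((measurable_one.indicator hS).comp measurable_fst).mul (cv_prod_meas hh hg)
  rw [← lintegral_indicator hS]
  calc ∫⁻ u, S.indicator (cv h g) u
      = ∫⁻ u, ∫⁻ x, S.indicator (1 : ℝ → ℝ≥0∞) u * (h x * g (u - x)) :=
        lintegral_congr step0
    _ = ∫⁻ x, ∫⁻ u, S.indicator (1 : ℝ → ℝ≥0∞) u * (h x * g (u - x)) :=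
        lintegral_lintegral_swap measp.aemeasurable
    _ = ∫⁻ x, h x * ∫⁻ u, S.indicator (1 : ℝ → ℝ≥0∞) u * g (u - x) := by
        congr 1; funext x
        simp_rw [mul_left_comm (S.indicator (1 : ℝ → ℝ≥0∞) _)]
        rw [lintegral_const_mul (f := fun u => S.indicator (1 : ℝ → ℝ≥0∞) u * g (u - x)) _
          (((measurable_one.indicator hS)).mul
          (by fun_prop : Measurable fun u : ℝ => g (u - x)))]
    _ = ∫⁻ x, h x * ∫⁻ y, S.indicator (1 : ℝ → ℝ≥0∞) (y + x) * g y := by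
        congr 1; funext x
        congr 1
        rw [← lintegral_add_right_eq_self
          (fun u => S.indicator (1 : ℝ → ℝ≥0∞) u * g (u - x)) x]
        simp

omit hm hsupp in
lemma indicator_one_le {S T : Set ℝ} {p q : ℝ} (h : p ∈ S → q ∈ T) :
    S.indicator (1 : ℝ → ℝ≥0∞) p ≤ T.indicator (1 : ℝ → ℝ≥0∞) q := by
  by_cases hy : p ∈ S
  · rw [Set.indicator_of_mem hy, Set.indicator_of_mem (h hy)]
    exact le_refl _
  · simp [Set.indicator_of_notMem hy]

lemma strip_Iic (δ : ℝ) {g : ℝ → ℝ≥0∞} (hg : Measurable g) (hgs : ∀ x ≤ 0, g x = 0) :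
    ∫⁻ x in Iic δ, cv g ψ x ≤ (∫⁻ x in Iic δ, g x) * (∫⁻ x in Iic δ, ψ x) := by
  set q := ∫⁻ x in Iic δ, ψ x with hq
  rw [cv_strip measurableSet_Iic hg hm]
  have hpt : ∀ x, g x * (∫⁻ y, (Iic δ).indicator (1 : ℝ → ℝ≥0∞) (y + x) * ψ y)
      ≤ (Iic δ).indicator (fun _ => q) x * g x := by
    intro x
    rcases le_or_gt x 0 with hx | hx
    · simp [hgs x hx]
    rcases le_or_gt x δ with hxδ | hxδ
    · have hinner : (∫⁻ y, (Iic δ).indicator (1 : ℝ → ℝ≥0∞) (y + x) * ψ y) ≤ q := by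
        have : ∀ y, (Iic δ).indicator (1 : ℝ → ℝ≥0∞) (y + x) * ψ y
            ≤ (Iic δ).indicator (1 : ℝ → ℝ≥0∞) y * ψ y := by
          intro y
          rcases le_or_gt y 0 with hy | hy
          · simp [hsupp y hy]
          · refine mul_le_mul_left (indicator_one_le fun hmem => ?_) _
            have : y + x ≤ δ := hmem
            exact Set.mem_Iic.2 (by linarith)
        refine le_trans (lintegral_mono this) ?_
        rw [hq, ← lintegral_indicator measurableSet_Iic]
        refine le_of_eq (lintegral_congr fun y => ?_)
        by_cases hy : y ∈ Iic δ
        · simp [Set.indicator_of_mem hy]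
        · simp [Set.indicator_of_notMem hy]
      rw [Set.indicator_of_mem (Set.mem_Iic.2 hxδ), mul_comm (g x)]
      exact mul_le_mul_left hinner _
    · have hinner : (∫⁻ y, (Iic δ).indicator (1 : ℝ → ℝ≥0∞) (y + x) * ψ y) = 0 := by
        have : ∀ y, (Iic δ).indicator (1 : ℝ → ℝ≥0∞) (y + x) * ψ y = 0 := by
          intro y
          rcases le_or_gt y 0 with hy | hy
          · simp [hsupp y hy]
          · rw [Set.indicator_of_notMem, zero_mul]
            simp only [Set.mem_Iic, not_le]
            linarith
        simp [this]
      rw [hinner, mul_zero]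
      exact zero_le
  refine le_trans (lintegral_mono hpt) ?_
  have : ∀ x, (Iic δ).indicator (fun _ => q) x * g x = (Iic δ).indicator (fun y => q * g y) x := by
    intro x
    by_cases hx : x ∈ Iic δ
    · simp [Set.indicator_of_mem hx]
    · simp [Set.indicator_of_notMem hx]
  rw [lintegral_congr this, lintegral_indicator measurableSet_Iic,
    lintegral_const_mul _ hg, mul_comm]

lemma fpow_Iic (δ : ℝ) : ∀ n, ∫⁻ x in Iic δ, fpow ψ n x ≤ (∫⁻ x in Iic δ, ψ x) ^ (n + 1)
  | 0 => by simp [fpow]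
  | n + 1 => by
      calc ∫⁻ x in Iic δ, fpow ψ (n+1) x
          ≤ (∫⁻ x in Iic δ, fpow ψ n x) * (∫⁻ x in Iic δ, ψ x) :=
            strip_Iic hm hsupp δ (fpow_meas hm n) (fpow_supp hsupp n)
        _ ≤ (∫⁻ x in Iic δ, ψ x) ^ (n + 1) * (∫⁻ x in Iic δ, ψ x) :=
            mul_le_mul_left (fpow_Iic δ n) _
        _ = (∫⁻ x in Iic δ, ψ x) ^ (n + 2) := by ring

lemma ebound (a δ : ℝ) (j : ℕ) :
    ∀ k, ∫⁻ x in Ioc a (a + δ), ee ψ a j k x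
      ≤ (∫⁻ x, bb ψ a j x) * (∫⁻ x in Iic δ, ψ x) ^ k
  | 0 => by
      simpa [ee] using setLIntegral_le_lintegral _ (fun x => bb ψ a j x)
  | k + 1 => by
      rw [ee_eq hm a j k, cv_strip measurableSet_Ioc (bb_meas hm a j) (fpow_meas hm k)]
      set q := ∫⁻ x in Iic δ, ψ x with hq
      have hpt : ∀ x, bb ψ a j x * (∫⁻ y, (Ioc a (a + δ)).indicator (1 : ℝ → ℝ≥0∞) (y + x) * fpow ψ k y)
          ≤ bb ψ a j x * q ^ (k + 1) := by
        intro x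
        rcases le_or_gt x a with hx | hx
        · simp [bb_supp a j x hx]
        · refine mul_le_mul_right ?_ _
          calc (∫⁻ y, (Ioc a (a + δ)).indicator (1 : ℝ → ℝ≥0∞) (y + x) * fpow ψ k y)
              ≤ ∫⁻ y, (Iic δ).indicator (1 : ℝ → ℝ≥0∞) y * fpow ψ k y := by
                refine lintegral_mono fun y => mul_le_mul_left (indicator_one_le fun hmem => ?_) _
                have h2 : y + x ≤ a + δ := hmem.2
                exact Set.mem_Iic.2 (by linarith)
            _ = ∫⁻ y in Iic δ, fpow ψ k y := by
                rw [← lintegral_indicator measurableSet_Iic]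
                refine lintegral_congr fun y => ?_
                by_cases hy : y ∈ Iic δ
                · simp [Set.indicator_of_mem hy]
                · simp [Set.indicator_of_notMem hy]
            _ ≤ q ^ (k + 1) := fpow_Iic hm hsupp δ k
      refine le_trans (lintegral_mono hpt) ?_
      rw [lintegral_mul_const _ (bb_meas hm a j)]

omit hm hsupp in
lemma tsum_cauchy {B : ℕ → ℝ≥0∞} {q : ℝ≥0∞} :
    ∑' n : ℕ, ∑ j ∈ Finset.range (n + 1), B j * q ^ (n - j)
      ≤ (∑' j, B j) * (1 - q)⁻¹ := by
  rw [ENNReal.tsum_eq_iSup_sum]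
  refine iSup_le fun s => ?_
  obtain ⟨N, hN⟩ : ∃ N, s ⊆ Finset.range N :=
    ⟨s.sup id + 1, fun i hi => Finset.mem_range.2 (Nat.lt_succ_of_le (Finset.le_sup (f := id) hi))⟩
  refine le_trans (Finset.sum_le_sum_of_subset hN) ?_
  have reflect : ∀ n, ∑ j ∈ Finset.range (n + 1), B j * q ^ (n - j)
      = ∑ k ∈ Finset.range (n + 1), B (n - k) * q ^ k := by
    intro n
    rw [← Finset.sum_range_reflect (fun k => B (n - k) * q ^ k) (n + 1)]
    refine Finset.sum_congr rfl fun j hj => ?_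
    have hj' : j ≤ n := by simpa [Nat.lt_succ_iff] using hj
    congr 2 <;> omega
  calc ∑ n ∈ Finset.range N, ∑ j ∈ Finset.range (n + 1), B j * q ^ (n - j)
      = ∑ n ∈ Finset.range N, ∑ k ∈ Finset.range (n + 1), B (n - k) * q ^ k := by
        exact Finset.sum_congr rfl fun n _ => reflect n
    _ = ∑ n ∈ Finset.range N, ∑ k ∈ Finset.range N,
          (if k ≤ n then B (n - k) * q ^ k else 0) := by
        refine Finset.sum_congr rfl fun n hn => ?_
        have hn' : n < N := Finset.mem_range.1 hn
        have hflt : (Finset.range N).filter (fun k => k ≤ n) = Finset.range (n + 1) := by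
          ext k
          simp only [Finset.mem_filter, Finset.mem_range, Nat.lt_succ_iff]
          omega
        rw [← Finset.sum_filter, hflt]
    _ = ∑ k ∈ Finset.range N, ∑ n ∈ Finset.range N,
          (if k ≤ n then B (n - k) * q ^ k else 0) := Finset.sum_comm
    _ ≤ ∑ k ∈ Finset.range N, (∑' j, B j) * q ^ k := by
        refine Finset.sum_le_sum fun k _ => ?_
        have hflt : (Finset.range N).filter (fun n => k ≤ n) = Finset.Ico k N := by
          ext n
          simp only [Finset.mem_filter, Finset.mem_range, Finset.mem_Ico]
          omega
        rw [← Finset.sum_filter, hflt, Finset.sum_Ico_eq_sum_range]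
        have : ∀ i, B (k + i - k) * q ^ k = B i * q ^ k := by
          intro i; congr 2; omega
        simp_rw [this]
        rw [← Finset.sum_mul]
        exact mul_le_mul_left (ENNReal.sum_le_tsum _) _
    _ = (∑' j, B j) * ∑ k ∈ Finset.range N, q ^ k := by rw [Finset.mul_sum]
    _ ≤ (∑' j, B j) * ∑' k, q ^ k := mul_le_mul_right (ENNReal.sum_le_tsum _) _
    _ = (∑' j, B j) * (1 - q)⁻¹ := by rw [ENNReal.tsum_geometric]

lemma renewal_bound (hmass : ∫⁻ x, ψ x = 1) (a δ : ℝ) :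
    ∑' n, ∫⁻ x in Ioc a (a + δ), fpow ψ n x ≤ (1 - ∫⁻ x in Iic δ, ψ x)⁻¹ := by
  set q := ∫⁻ x in Iic δ, ψ x with hq
  have hterm : ∀ n, ∫⁻ x in Ioc a (a + δ), fpow ψ n x
      ≤ ∑ j ∈ Finset.range (n + 1), (∫⁻ x, bb ψ a j x) * q ^ (n - j) := by
    intro n
    have hdec := decomp hm hsupp a n
    calc ∫⁻ x in Ioc a (a + δ), fpow ψ n x
        = ∫⁻ x in Ioc a (a + δ),
            (rr ψ a n x + ∑ j ∈ Finset.range (n + 1), ee ψ a j (n - j) x) := by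
          rw [hdec]
      _ = (∫⁻ x in Ioc a (a + δ), rr ψ a n x)
            + ∫⁻ x in Ioc a (a + δ), ∑ j ∈ Finset.range (n + 1), ee ψ a j (n - j) x := by
          rw [lintegral_add_left (rr_meas hm a n)]
      _ = (0 : ℝ≥0∞) + ∑ j ∈ Finset.range (n + 1), ∫⁻ x in Ioc a (a + δ), ee ψ a j (n - j) x := by
          congr 1
          · have : ∀ x ∈ Ioc a (a + δ), rr ψ a n x = (0 : ℝ≥0∞) := by
              intro x hx
              have hxa : ¬ x ∈ Iic a := by simp only [Set.mem_Iic, not_le]; exact hx.1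
              cases n with
              | zero => exact Set.indicator_of_notMem hxa _
              | succ m => exact Set.indicator_of_notMem hxa _
            calc ∫⁻ x in Ioc a (a + δ), rr ψ a n x
                = ∫⁻ x in Ioc a (a + δ), (0 : ℝ≥0∞) :=
                  setLIntegral_congr_fun measurableSet_Ioc this
              _ = 0 := lintegral_zero
          · exact lintegral_finset_sum _ fun j _ => ee_meas hm a j (n - j)
      _ ≤ ∑ j ∈ Finset.range (n + 1), (∫⁻ x, bb ψ a j x) * q ^ (n - j) := by
          rw [zero_add]
          exact Finset.sum_le_sum fun j _ => ebound hm hsupp a δ j (n - j)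
  calc ∑' n, ∫⁻ x in Ioc a (a + δ), fpow ψ n x
      ≤ ∑' n, ∑ j ∈ Finset.range (n + 1), (∫⁻ x, bb ψ a j x) * q ^ (n - j) :=
        ENNReal.tsum_le_tsum hterm
    _ ≤ (∑' j, ∫⁻ x, bb ψ a j x) * (1 - q)⁻¹ := tsum_cauchy
    _ ≤ 1 * (1 - q)⁻¹ := mul_le_mul_left (bb_tsum_le hm hmass a) _
    _ = (1 - q)⁻¹ := one_mul _

end renewal



section bridge

variable {φ : ℝ → ℝ} {α₀ : ℝ}

noncomputable def psi0 (φ : ℝ → ℝ) (α₀ : ℝ) : ℝ → ℝ :=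
  fun x => Real.exp (-(α₀ * x)) * φ x

noncomputable def psi (φ : ℝ → ℝ) (α₀ : ℝ) : ℝ → ℝ≥0∞ :=
  fun x => (Ioi (0:ℝ)).indicator (fun y => ENNReal.ofReal (psi0 φ α₀ y)) x

lemma psi0_meas (hφ : Measurable φ) : Measurable (psi0 φ α₀) := by
  unfold psi0; fun_prop

lemma psi0_nonneg (hφ0 : ∀ t : ℝ, 0 ≤ t → 0 ≤ φ t) :
    ∀ x, 0 ≤ x → 0 ≤ psi0 φ α₀ x := fun x hx =>
  mul_nonneg (Real.exp_pos _).le (hφ0 x hx)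

lemma psi_meas (hφ : Measurable φ) : Measurable (psi φ α₀) :=
  ((ENNReal.measurable_ofReal.comp (psi0_meas hφ))).indicator measurableSet_Ioi

lemma psi_supp : ∀ x ≤ 0, psi φ α₀ x = 0 := fun x hx =>
  Set.indicator_of_notMem (by simpa using hx) _

lemma psi_of_pos {x : ℝ} (hx : 0 < x) : psi φ α₀ x = ENNReal.ofReal (psi0 φ α₀ x) :=
  Set.indicator_of_mem hx _

lemma psi_mass (hφmeas : Measurable φ) (hφ0 : ∀ t : ℝ, 0 ≤ t → 0 ≤ φ t)
    (hroot : (∫ t in Ioi (0:ℝ), Real.exp (-(α₀ * t)) * φ t) = 1) :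
    ∫⁻ x, psi φ α₀ x = 1 := by
  have hInt : IntegrableOn (fun t => Real.exp (-(α₀ * t)) * φ t) (Ioi 0) := by
    by_contra h
    rw [MeasureTheory.integral_undef h] at hroot
    exact one_ne_zero hroot.symm
  have hnn : 0 ≤ᵐ[volume.restrict (Ioi (0:ℝ))] fun t => Real.exp (-(α₀ * t)) * φ t :=
    (ae_restrict_iff' measurableSet_Ioi).2 (ae_of_all _ fun x hx =>
      mul_nonneg (Real.exp_pos _).le (hφ0 x (le_of_lt hx)))
  calc ∫⁻ x, psi φ α₀ x
      = ∫⁻ x in Ioi (0:ℝ), ENNReal.ofReal (psi0 φ α₀ x) :=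
        lintegral_indicator measurableSet_Ioi _
    _ = ENNReal.ofReal (∫ t in Ioi (0:ℝ), Real.exp (-(α₀ * t)) * φ t) :=
        (ofReal_integral_eq_lintegral_ofReal hInt hnn).symm
    _ = 1 := by rw [hroot, ENNReal.ofReal_one]

/-- measurability of the parametrized convolution integral -/
lemma meas_paramInt {f g : ℝ → ℝ} (hf : Measurable f) (hg : Measurable g) :
    Measurable fun t => ∫ s in (0:ℝ)..t, f s * g (t - s) := by
  have hG1 : StronglyMeasurable fun p : ℝ × ℝ =>
      if 0 < p.2 ∧ p.2 ≤ p.1 then f p.2 * g (p.1 - p.2) else 0 := by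
    refine Measurable.stronglyMeasurable ?_
    refine Measurable.ite ?_ (by fun_prop) measurable_zero
    exact MeasurableSet.inter (measurableSet_lt measurable_const measurable_snd)
      (measurableSet_le measurable_snd measurable_fst)
  have hG2 : StronglyMeasurable fun p : ℝ × ℝ =>
      if p.1 < p.2 ∧ p.2 ≤ 0 then f p.2 * g (p.1 - p.2) else 0 := by
    refine Measurable.stronglyMeasurable ?_
    refine Measurable.ite ?_ (by fun_prop) measurable_zero
    exact MeasurableSet.inter (measurableSet_lt measurable_fst measurable_snd)
      (measurableSet_le measurable_snd measurable_const)
  have h1 : Measurable fun t => ∫ s, (if 0 < s ∧ s ≤ t then f s * g (t - s) else 0) :=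
    (hG1.integral_prod_right').measurable
  have h2 : Measurable fun t => ∫ s, (if t < s ∧ s ≤ 0 then f s * g (t - s) else 0) :=
    (hG2.integral_prod_right').measurable
  have key : ∀ t : ℝ, ∫ s in (0:ℝ)..t, f s * g (t - s)
      = (∫ s, (if 0 < s ∧ s ≤ t then f s * g (t - s) else 0))
        - ∫ s, (if t < s ∧ s ≤ 0 then f s * g (t - s) else 0) := by
    intro t
    have e1 : (∫ s, (if 0 < s ∧ s ≤ t then f s * g (t - s) else 0))
        = ∫ s in Ioc (0:ℝ) t, f s * g (t - s) := by
      rw [← MeasureTheory.integral_indicator measurableSet_Ioc]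
      congr 1; funext s
      simp [Set.indicator_apply, Set.mem_Ioc]
    have e2 : (∫ s, (if t < s ∧ s ≤ 0 then f s * g (t - s) else 0))
        = ∫ s in Ioc t (0:ℝ), f s * g (t - s) := by
      rw [← MeasureTheory.integral_indicator measurableSet_Ioc]
      congr 1; funext s
      simp [Set.indicator_apply, Set.mem_Ioc]
    rw [e1, e2]
    rfl
  simp_rw [key]
  exact h1.sub h2

lemma cp_meas (hφ : Measurable φ) : ∀ n, Measurable (convPow (psi0 φ α₀) n)
  | 0 => psi0_meas hφ
  | n + 1 => by
      have : convPow (psi0 φ α₀) (n+1)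
          = fun t => ∫ s in (0:ℝ)..t, convPow (psi0 φ α₀) n s * psi0 φ α₀ (t - s) := rfl
      rw [this]
      exact meas_paramInt (cp_meas hφ n) (psi0_meas hφ)

lemma cp_nonneg (hφ0 : ∀ t : ℝ, 0 ≤ t → 0 ≤ φ t) :
    ∀ n, ∀ x : ℝ, 0 ≤ x → 0 ≤ convPow (psi0 φ α₀) n x
  | 0 => fun x hx => psi0_nonneg hφ0 x hx
  | n + 1 => by
      intro x hx
      show 0 ≤ ∫ s in (0:ℝ)..x, convPow (psi0 φ α₀) n s * psi0 φ α₀ (x - s)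
      refine intervalIntegral.integral_nonneg hx fun u hu => ?_
      exact mul_nonneg (cp_nonneg hφ0 n u hu.1) (psi0_nonneg hφ0 _ (by linarith [hu.2]))

lemma tilt : ∀ n, ∀ t : ℝ, 0 ≤ t →
    convPow (psi0 φ α₀) n t = Real.exp (-(α₀ * t)) * convPow φ n t
  | 0 => fun t _ => rfl
  | n + 1 => by
      intro t ht
      show (∫ s in (0:ℝ)..t, convPow (psi0 φ α₀) n s * psi0 φ α₀ (t - s))
        = Real.exp (-(α₀ * t)) * ∫ s in (0:ℝ)..t, convPow φ n s * φ (t - s)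
      rw [← intervalIntegral.integral_const_mul]
      refine intervalIntegral.integral_congr fun s hs => ?_
      rw [Set.uIcc_of_le ht] at hs
      obtain ⟨hs0, hst⟩ := hs
      calc convPow (psi0 φ α₀) n s * psi0 φ α₀ (t - s)
          = (Real.exp (-(α₀ * s)) * convPow φ n s)
              * (Real.exp (-(α₀ * (t - s))) * φ (t - s)) := by
            rw [tilt n s hs0]; rfl
        _ = (Real.exp (-(α₀ * s)) * Real.exp (-(α₀ * (t - s))))
              * (convPow φ n s * φ (t - s)) := by ring
        _ = Real.exp (-(α₀ * t)) * (convPow φ n s * φ (t - s)) := by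
            rw [← Real.exp_add]; congr 1; ring

lemma density (hφmeas : Measurable φ) (hφ0 : ∀ t : ℝ, 0 ≤ t → 0 ≤ φ t)
    (hmass : ∫⁻ x, psi φ α₀ x = 1) :
    ∀ n, ∀ᵐ x : ℝ, x ∈ Ioi (0:ℝ) →
      fpow (psi φ α₀) n x = ENNReal.ofReal (convPow (psi0 φ α₀) n x) := by
  intro n
  induction n with
  | zero => exact ae_of_all _ fun x hx => psi_of_pos hx
  | succ n ih =>
      have hfin : ∀ᵐ x : ℝ, fpow (psi φ α₀) (n+1) x < ∞ :=
        ae_lt_top (fpow_meas (psi_meas hφmeas) (n+1))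
          (by rw [fpow_mass (psi_meas hφmeas) hmass (n+1)]; exact ENNReal.one_ne_top)
      have hcong : ∀ x : ℝ, fpow (psi φ α₀) (n+1) x
          = ∫⁻ y, (Ioo 0 x).indicator
              (fun y => ENNReal.ofReal (convPow (psi0 φ α₀) n y * psi0 φ α₀ (x - y))) y := by
        intro x
        show (∫⁻ y, fpow (psi φ α₀) n y * psi φ α₀ (x - y)) = _
        refine lintegral_congr_ae ?_
        filter_upwards [ih] with y hy
        rcases le_or_gt y 0 with h1 | h1
        · rw [fpow_supp psi_supp n y h1, zero_mul,
            Set.indicator_of_notMem (fun hc => absurd hc.1 (not_lt.2 h1)) _]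
        rcases lt_or_ge y x with h2 | h2
        · rw [hy (Set.mem_Ioi.2 h1), Set.indicator_of_mem (Set.mem_Ioo.2 ⟨h1, h2⟩),
            psi_of_pos (by linarith : (0:ℝ) < x - y),
            ← ENNReal.ofReal_mul (cp_nonneg hφ0 n y h1.le)]
        · rw [psi_supp (x - y) (by linarith), mul_zero,
            Set.indicator_of_notMem (fun hc => absurd hc.2 (not_lt.2 h2)) _]
      filter_upwards [hfin] with x hxfin hx
      have hx0 : (0:ℝ) < x := hx
      set h : ℝ → ℝ := fun y => convPow (psi0 φ α₀) n y * psi0 φ α₀ (x - y) with hh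
      have hmeas_h : Measurable h := (cp_meas hφmeas n).mul ((psi0_meas hφmeas).comp (by fun_prop))
      have hlint : fpow (psi φ α₀) (n+1) x = ∫⁻ y in Ioo 0 x, ENNReal.ofReal (h y) := by
        rw [hcong x, lintegral_indicator measurableSet_Ioo]
      have hlt : (∫⁻ y in Ioo 0 x, ENNReal.ofReal (h y)) < ∞ := hlint ▸ hxfin
      have hnn : ∀ᵐ y ∂(volume.restrict (Ioo 0 x)), 0 ≤ h y :=
        (ae_restrict_iff' measurableSet_Ioo).2 (ae_of_all _ fun y hy =>
          mul_nonneg (cp_nonneg hφ0 n y hy.1.le) (psi0_nonneg hφ0 _ (by linarith [hy.2])))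
      have hIntg : IntegrableOn h (Ioo 0 x) := by
        refine ⟨hmeas_h.aestronglyMeasurable, ?_⟩
        rw [hasFiniteIntegral_iff_norm]
        have : ∀ᵐ y ∂(volume.restrict (Ioo 0 x)), ENNReal.ofReal ‖h y‖ = ENNReal.ofReal (h y) := by
          filter_upwards [hnn] with y hy
          rw [Real.norm_of_nonneg hy]
        rw [lintegral_congr_ae this]
        exact hlt
      have hcp : convPow (psi0 φ α₀) (n+1) x = ∫ y in Ioo 0 x, h y := by
        show (∫ s in (0:ℝ)..x, convPow (psi0 φ α₀) n s * psi0 φ α₀ (x - s)) = _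
        rw [intervalIntegral.integral_of_le hx0.le, integral_Ioc_eq_integral_Ioo]
      rw [hcp, ofReal_integral_eq_lintegral_ofReal hIntg hnn, hlint]

lemma bridge (hφmeas : Measurable φ) (hφ0 : ∀ t : ℝ, 0 ≤ t → 0 ≤ φ t)
    (hmass : ∫⁻ x, psi φ α₀ x = 1) (n : ℕ) {t : ℝ} (ht : 0 ≤ t) :
    Real.exp (-(α₀ * t)) * (∫ s in (0:ℝ)..t, convPow φ n (t - s) * Real.exp (α₀ * s / 2))
      = (∫⁻ u in Ioc 0 t, fpow (psi φ α₀) n u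
          * ENNReal.ofReal (Real.exp (-(α₀ * (t - u)) / 2))).toReal := by
  set H : ℝ → ℝ := fun u => convPow (psi0 φ α₀) n u * Real.exp (-(α₀ * (t - u)) / 2) with hH
  have hHmeas : Measurable H :=
    (cp_meas hφmeas n).mul (Real.measurable_exp.comp (by fun_prop))
  have step1 : Real.exp (-(α₀ * t)) * (∫ s in (0:ℝ)..t, convPow φ n (t-s) * Real.exp (α₀*s/2))
      = ∫ s in (0:ℝ)..t, H (t - s) := by
    rw [← intervalIntegral.integral_const_mul]
    refine intervalIntegral.integral_congr fun s hs => ?_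
    rw [Set.uIcc_of_le ht] at hs
    obtain ⟨hs0, hst⟩ := hs
    have htilt := tilt (φ := φ) (α₀ := α₀) n (t - s) (by linarith : (0:ℝ) ≤ t - s)
    show Real.exp (-(α₀*t)) * (convPow φ n (t-s) * Real.exp (α₀*s/2)) = H (t - s)
    rw [hH]
    dsimp only
    rw [htilt]
    have harg : t - (t - s) = s := by ring
    rw [harg]
    calc Real.exp (-(α₀*t)) * (convPow φ n (t-s) * Real.exp (α₀*s/2))
        = (Real.exp (-(α₀*t)) * Real.exp (α₀*s/2)) * convPow φ n (t-s) := by ring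
      _ = (Real.exp (-(α₀*(t-s))) * Real.exp (-(α₀*s) / 2)) * convPow φ n (t-s) := by
          rw [← Real.exp_add, ← Real.exp_add]; congr 1; ring
      _ = Real.exp (-(α₀*(t-s))) * convPow φ n (t-s) * Real.exp (-(α₀*s) / 2) := by ring
  have step2 : (∫ s in (0:ℝ)..t, H (t - s)) = ∫ u in (0:ℝ)..t, H u := by
    have h := intervalIntegral.integral_comp_sub_left (a := 0) (b := t) H t
    simpa using h
  have step3 : (∫ u in (0:ℝ)..t, H u) = ∫ u in Ioc (0:ℝ) t, H u :=
    intervalIntegral.integral_of_le ht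
  have hnn : 0 ≤ᵐ[volume.restrict (Ioc (0:ℝ) t)] H :=
    (ae_restrict_iff' measurableSet_Ioc).2 (ae_of_all _ fun u hu =>
      mul_nonneg (cp_nonneg hφ0 n u hu.1.le) (Real.exp_pos _).le)
  have step4 : (∫ u in Ioc (0:ℝ) t, H u)
      = (∫⁻ u in Ioc (0:ℝ) t, ENNReal.ofReal (H u)).toReal :=
    integral_eq_lintegral_of_nonneg_ae hnn hHmeas.aestronglyMeasurable
  have step5 : (∫⁻ u in Ioc (0:ℝ) t, ENNReal.ofReal (H u))
      = ∫⁻ u in Ioc 0 t, fpow (psi φ α₀) n u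
          * ENNReal.ofReal (Real.exp (-(α₀ * (t - u)) / 2)) := by
    refine lintegral_congr_ae ?_
    have hres := ae_restrict_of_ae (μ := volume) (s := Ioc (0:ℝ) t)
      (density hφmeas hφ0 hmass n)
    filter_upwards [hres, ae_restrict_mem measurableSet_Ioc] with u hu humem
    rw [hH]
    dsimp only
    rw [ENNReal.ofReal_mul (cp_nonneg hφ0 n u humem.1.le), hu (Set.mem_Ioi.2 humem.1)]
  rw [step1, step2, step3, step4, step5]

end bridge

section mth

variable {ψ : ℝ → ℝ≥0∞} {α₀ : ℝ}

lemma small_tail (hm : Measurable ψ) (hsupp : ∀ x ≤ 0, ψ x = 0)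
    (hmass : ∫⁻ x, ψ x = 1) : ∃ δ : ℝ, 0 < δ ∧ ∫⁻ x in Iic δ, ψ x ≤ 1/2 := by
  set ν := volume.withDensity ψ with hν
  have happ : ∀ s : Set ℝ, MeasurableSet s → ν s = ∫⁻ x in s, ψ x :=
    fun s hs => withDensity_apply ψ hs
  have htend := MeasureTheory.tendsto_measure_iInter_atTop (μ := ν)
    (s := fun k : ℕ => Iic (1/((k:ℝ)+1)))
    (fun k => measurableSet_Iic.nullMeasurableSet)
    (fun i j hij => Iic_subset_Iic.2 (by
      apply one_div_le_one_div_of_le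
      · positivity
      · have : (i:ℝ) ≤ j := Nat.cast_le.2 hij
        linarith))
    ⟨0, by
      rw [happ _ measurableSet_Iic]
      refine ne_top_of_le_ne_top (by simp [hmass] : (1:ℝ≥0∞) ≠ ⊤) ?_
      rw [← hmass]
      exact setLIntegral_le_lintegral _ _⟩
  have hint : (⋂ k : ℕ, Iic (1/((k:ℝ)+1))) = Iic 0 := by
    ext x
    simp only [mem_iInter, mem_Iic]
    constructor
    · intro h
      by_contra hx
      push_neg at hx
      obtain ⟨k, hk⟩ := exists_nat_one_div_lt hx
      exact absurd (h k) (not_le.2 hk)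
    · intro h k
      refine le_trans h (by positivity)
  have hzero : ν (Iic (0:ℝ)) = 0 := by
    rw [happ _ measurableSet_Iic]
    calc ∫⁻ x in Iic (0:ℝ), ψ x = ∫⁻ _ in Iic (0:ℝ), (0:ℝ≥0∞) :=
          setLIntegral_congr_fun measurableSet_Iic (fun x hx => hsupp x hx)
      _ = 0 := lintegral_zero
  rw [hint, hzero] at htend
  obtain ⟨k, hk⟩ := (htend.eventually_lt_const (by norm_num : (0:ℝ≥0∞) < 1/2)).exists
  refine ⟨1/((k:ℝ)+1), by positivity, ?_⟩
  rw [← happ _ measurableSet_Iic]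
  exact hk.le

lemma mle1 (hm : Measurable ψ) (hmass : ∫⁻ x, ψ x = 1) (hα₀ : 0 < α₀) (n : ℕ) (t : ℝ) :
    (∫⁻ u in Ioc 0 t, fpow ψ n u * ENNReal.ofReal (Real.exp (-(α₀ * (t - u)) / 2))) ≤ 1 := by
  have h1 : ∀ u ∈ Ioc (0:ℝ) t, fpow ψ n u * ENNReal.ofReal (Real.exp (-(α₀ * (t - u)) / 2))
      ≤ fpow ψ n u := by
    intro u hu
    have : ENNReal.ofReal (Real.exp (-(α₀ * (t - u)) / 2)) ≤ 1 := by
      rw [← ENNReal.ofReal_one]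
      refine ENNReal.ofReal_le_ofReal ?_
      rw [← Real.exp_zero]
      refine (Real.exp_le_exp.2 ?_)
      have h2 : 0 ≤ t - u := by linarith [hu.2]
      nlinarith [hα₀.le]
    calc fpow ψ n u * ENNReal.ofReal (Real.exp (-(α₀ * (t - u)) / 2))
        ≤ fpow ψ n u * 1 := mul_le_mul_right this _
      _ = fpow ψ n u := mul_one _
  calc (∫⁻ u in Ioc 0 t, fpow ψ n u * ENNReal.ofReal (Real.exp (-(α₀ * (t - u)) / 2)))
      ≤ ∫⁻ u in Ioc 0 t, fpow ψ n u := setLIntegral_mono (fpow_meas hm n) h1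
    _ ≤ ∫⁻ u, fpow ψ n u := setLIntegral_le_lintegral _ _
    _ = 1 := fpow_mass hm hmass n

lemma mcover (hm : Measurable ψ) (hα₀ : 0 < α₀) {δ : ℝ} (hδ : 0 < δ) (t : ℝ) (n : ℕ) :
    (∫⁻ u in Ioc 0 t, fpow ψ n u * ENNReal.ofReal (Real.exp (-(α₀ * (t - u)) / 2)))
      ≤ ∑' k : ℕ, (ENNReal.ofReal (Real.exp (-(α₀ * δ) / 2)))^k *
          ∫⁻ u in Ioc (t - ((k:ℝ)+1)*δ) (t - ((k:ℝ)+1)*δ + δ), fpow ψ n u := by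
  set c := ENNReal.ofReal (Real.exp (-(α₀ * δ) / 2)) with hc
  set F : ℝ → ℝ≥0∞ := fun u => fpow ψ n u * ENNReal.ofReal (Real.exp (-(α₀ * (t - u)) / 2))
    with hF
  have hFmeas : ∀ k : ℕ, Measurable ((Ioc (t - ((k:ℝ)+1)*δ) (t - ((k:ℝ)+1)*δ + δ)).indicator
      (fun u => c^k * fpow ψ n u)) :=
    fun k => (measurable_const.mul (fpow_meas hm n)).indicator measurableSet_Ioc
  have hpt : ∀ u : ℝ, (Ioc 0 t).indicator F u
      ≤ ∑' k : ℕ, (Ioc (t - ((k:ℝ)+1)*δ) (t - ((k:ℝ)+1)*δ + δ)).indicator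
          (fun u => c^k * fpow ψ n u) u := by
    intro u
    by_cases hu : u ∈ Ioc 0 t
    · set k := ⌊(t - u)/δ⌋₊ with hk
      have htu : 0 ≤ t - u := by linarith [hu.2]
      have hk1 : (k:ℝ) * δ ≤ t - u := by
        rw [hk]
        exact (le_div_iff₀ hδ).1 (Nat.floor_le (div_nonneg htu hδ.le))
      have hk2 : t - u < ((k:ℝ)+1) * δ := by
        have h := Nat.lt_floor_add_one ((t-u)/δ)
        rw [← hk] at h
        exact (div_lt_iff₀ hδ).1 h
      refine le_trans ?_ (ENNReal.le_tsum k)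
      have hmem : u ∈ Ioc (t - ((k:ℝ)+1)*δ) (t - ((k:ℝ)+1)*δ + δ) :=
        ⟨by linarith, by linarith⟩
      rw [Set.indicator_of_mem hu, Set.indicator_of_mem hmem]
      have hw : ENNReal.ofReal (Real.exp (-(α₀ * (t - u)) / 2)) ≤ c^k := by
        rw [hc, ← ENNReal.ofReal_pow (Real.exp_pos _).le, ← Real.exp_nat_mul]
        refine ENNReal.ofReal_le_ofReal (Real.exp_le_exp.2 ?_)
        have : (k:ℝ)*(α₀*δ) ≤ α₀*(t-u) := by nlinarith [hα₀.le]
        linarith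
      calc F u ≤ fpow ψ n u * c^k := mul_le_mul_right hw _
        _ = c^k * fpow ψ n u := mul_comm _ _
    · rw [Set.indicator_of_notMem hu]
      exact zero_le
  calc (∫⁻ u in Ioc 0 t, F u)
      = ∫⁻ u, (Ioc 0 t).indicator F u := (lintegral_indicator measurableSet_Ioc _).symm
    _ ≤ ∫⁻ u, ∑' k : ℕ, (Ioc (t - ((k:ℝ)+1)*δ) (t - ((k:ℝ)+1)*δ + δ)).indicator
          (fun u => c^k * fpow ψ n u) u := lintegral_mono hpt
    _ = ∑' k : ℕ, ∫⁻ u, (Ioc (t - ((k:ℝ)+1)*δ) (t - ((k:ℝ)+1)*δ + δ)).indicator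
          (fun u => c^k * fpow ψ n u) u := lintegral_tsum fun k => (hFmeas k).aemeasurable
    _ = ∑' k : ℕ, c^k * ∫⁻ u in Ioc (t - ((k:ℝ)+1)*δ) (t - ((k:ℝ)+1)*δ + δ), fpow ψ n u := by
        refine tsum_congr fun k => ?_
        rw [lintegral_indicator measurableSet_Ioc, lintegral_const_mul _ (fpow_meas hm n)]

lemma msum (hm : Measurable ψ) (hsupp : ∀ x ≤ 0, ψ x = 0) (hmass : ∫⁻ x, ψ x = 1)
    (hα₀ : 0 < α₀) {δ : ℝ} (hδ : 0 < δ) (t : ℝ) :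
    ∑' n : ℕ, (∫⁻ u in Ioc 0 t, fpow ψ n u * ENNReal.ofReal (Real.exp (-(α₀ * (t - u)) / 2)))
      ≤ (1 - ENNReal.ofReal (Real.exp (-(α₀ * δ) / 2)))⁻¹ * (1 - ∫⁻ x in Iic δ, ψ x)⁻¹ := by
  set c := ENNReal.ofReal (Real.exp (-(α₀ * δ) / 2)) with hc
  calc ∑' n : ℕ, (∫⁻ u in Ioc 0 t, fpow ψ n u * ENNReal.ofReal (Real.exp (-(α₀ * (t - u)) / 2)))
      ≤ ∑' n : ℕ, ∑' k : ℕ, c^k *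
          ∫⁻ u in Ioc (t - ((k:ℝ)+1)*δ) (t - ((k:ℝ)+1)*δ + δ), fpow ψ n u :=
        ENNReal.tsum_le_tsum fun n => mcover hm hα₀ hδ t n
    _ = ∑' k : ℕ, ∑' n : ℕ, c^k *
          ∫⁻ u in Ioc (t - ((k:ℝ)+1)*δ) (t - ((k:ℝ)+1)*δ + δ), fpow ψ n u := ENNReal.tsum_comm
    _ = ∑' k : ℕ, c^k * ∑' n : ℕ,
          ∫⁻ u in Ioc (t - ((k:ℝ)+1)*δ) (t - ((k:ℝ)+1)*δ + δ), fpow ψ n u := by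
        refine tsum_congr fun k => ?_
        rw [ENNReal.tsum_mul_left]
    _ ≤ ∑' k : ℕ, c^k * (1 - ∫⁻ x in Iic δ, ψ x)⁻¹ := by
        refine ENNReal.tsum_le_tsum fun k => mul_le_mul_right ?_ _
        exact renewal_bound hm hsupp hmass (t - ((k:ℝ)+1)*δ) δ
    _ = (∑' k : ℕ, c^k) * (1 - ∫⁻ x in Iic δ, ψ x)⁻¹ := ENNReal.tsum_mul_right
    _ = (1 - c)⁻¹ * (1 - ∫⁻ x in Iic δ, ψ x)⁻¹ := by rw [ENNReal.tsum_geometric]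

lemma mdecay (hm : Measurable ψ) (hmass : ∫⁻ x, ψ x = 1)
    (hα₀ : 0 < α₀) (n : ℕ) {ε : ℝ} (hε : 0 < ε) :
    ∀ᶠ t in (atTop : Filter ℝ),
      (∫⁻ u in Ioc 0 t, fpow ψ n u * ENNReal.ofReal (Real.exp (-(α₀ * (t - u)) / 2))).toReal
        ≤ ε := by
  set ν := volume.withDensity (fpow ψ n) with hν
  have happ : ∀ s : Set ℝ, MeasurableSet s → ν s = ∫⁻ x in s, fpow ψ n x :=
    fun s hs => withDensity_apply _ hs
  have htend := MeasureTheory.tendsto_measure_iInter_atTop (μ := ν)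
    (s := fun A : ℕ => Ioi ((A:ℝ)))
    (fun A => measurableSet_Ioi.nullMeasurableSet)
    (fun i j hij => Ioi_subset_Ioi (Nat.cast_le.2 hij))
    ⟨0, by
      rw [happ _ measurableSet_Ioi]
      refine ne_top_of_le_ne_top (by simp [fpow_mass hm hmass n] : (∫⁻ x, fpow ψ n x) ≠ ⊤) ?_
      exact setLIntegral_le_lintegral _ _⟩
  have hint : (⋂ A : ℕ, Ioi ((A:ℝ))) = ∅ := by
    ext x
    simp only [mem_iInter, mem_Ioi, mem_empty_iff_false, iff_false, not_forall, not_lt]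
    obtain ⟨A, hA⟩ := exists_nat_gt x
    exact ⟨A, hA.le⟩
  rw [hint, measure_empty] at htend
  obtain ⟨A, hA⟩ := (htend.eventually_lt_const
    (ENNReal.ofReal_pos.2 (half_pos hε))).exists
  have hexp : Tendsto (fun t : ℝ => Real.exp (-(α₀ * (t - (A:ℝ))) / 2)) atTop (𝓝 0) := by
    refine Real.tendsto_exp_atBot.comp ?_
    have h1 : Tendsto (fun t : ℝ => t - (A:ℝ)) atTop atTop :=
      tendsto_atTop_add_const_right _ _ tendsto_id
    have h2 : Tendsto (fun t : ℝ => α₀ * (t - (A:ℝ))) atTop atTop := h1.const_mul_atTop hα₀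
    have h3 : Tendsto (fun t : ℝ => -(α₀ * (t - (A:ℝ)))) atTop atBot :=
      tendsto_neg_atTop_atBot.comp h2
    exact h3.atBot_div_const (by norm_num)
  have hev2 : ∀ᶠ t in (atTop : Filter ℝ), Real.exp (-(α₀ * (t - (A:ℝ))) / 2) < ε/2 :=
    hexp.eventually_lt_const (half_pos hε)
  filter_upwards [hev2, eventually_ge_atTop ((A:ℝ))] with t hexpt hta
  set F : ℝ → ℝ≥0∞ := fun u => fpow ψ n u * ENNReal.ofReal (Real.exp (-(α₀ * (t - u)) / 2))
    with hF
  have hFmeas : Measurable F :=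
    (fpow_meas hm n).mul (ENNReal.measurable_ofReal.comp (Real.measurable_exp.comp (by fun_prop)))
  have hsub : ∀ u, (Ioc 0 t).indicator F u
      ≤ (Ioc 0 ((A:ℝ))).indicator F u + (Ioc ((A:ℝ)) t).indicator F u := by
    intro u
    by_cases hu : u ∈ Ioc 0 t
    · rcases le_or_gt u (A:ℝ) with h | h
      · rw [Set.indicator_of_mem hu, Set.indicator_of_mem (Set.mem_Ioc.2 ⟨hu.1, h⟩)]
        exact le_self_add
      · rw [Set.indicator_of_mem hu,
          Set.indicator_of_mem (Set.mem_Ioc.2 ⟨h, hu.2⟩)]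
        exact le_add_self
    · rw [Set.indicator_of_notMem hu]
      exact zero_le
  have hbound1 : (∫⁻ u in Ioc 0 ((A:ℝ)), F u)
      ≤ ENNReal.ofReal (Real.exp (-(α₀ * (t - (A:ℝ))) / 2)) := by
    have hptw : ∀ u ∈ Ioc (0:ℝ) ((A:ℝ)), F u
        ≤ fpow ψ n u * ENNReal.ofReal (Real.exp (-(α₀ * (t - (A:ℝ))) / 2)) := by
      intro u hu
      refine mul_le_mul_right (ENNReal.ofReal_le_ofReal (Real.exp_le_exp.2 ?_)) _
      have h1 : α₀ * (t - (A:ℝ)) ≤ α₀ * (t - u) :=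
        mul_le_mul_of_nonneg_left (by linarith [hu.2]) hα₀.le
      linarith
    calc (∫⁻ u in Ioc 0 ((A:ℝ)), F u)
        ≤ ∫⁻ u in Ioc 0 ((A:ℝ)),
            fpow ψ n u * ENNReal.ofReal (Real.exp (-(α₀ * (t - (A:ℝ))) / 2)) :=
          setLIntegral_mono ((fpow_meas hm n).mul measurable_const) hptw
      _ = (∫⁻ u in Ioc 0 ((A:ℝ)), fpow ψ n u)
            * ENNReal.ofReal (Real.exp (-(α₀ * (t - (A:ℝ))) / 2)) :=
          lintegral_mul_const _ (fpow_meas hm n)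
      _ ≤ 1 * ENNReal.ofReal (Real.exp (-(α₀ * (t - (A:ℝ))) / 2)) := by
          refine mul_le_mul_left ?_ _
          rw [← fpow_mass hm hmass n]
          exact setLIntegral_le_lintegral _ _
      _ = ENNReal.ofReal (Real.exp (-(α₀ * (t - (A:ℝ))) / 2)) := one_mul _
  have hbound2 : (∫⁻ u in Ioc ((A:ℝ)) t, F u) ≤ ENNReal.ofReal (ε/2) := by
    have hptw : ∀ u ∈ Ioc ((A:ℝ)) t, F u ≤ fpow ψ n u := by
      intro u hu
      have : ENNReal.ofReal (Real.exp (-(α₀ * (t - u)) / 2)) ≤ 1 := by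
        rw [← ENNReal.ofReal_one]
        refine ENNReal.ofReal_le_ofReal ?_
        rw [← Real.exp_zero]
        refine Real.exp_le_exp.2 ?_
        have h2 : 0 ≤ t - u := by linarith [hu.2]
        nlinarith [hα₀.le]
      calc F u ≤ fpow ψ n u * 1 := mul_le_mul_right this _
        _ = fpow ψ n u := mul_one _
    calc (∫⁻ u in Ioc ((A:ℝ)) t, F u)
        ≤ ∫⁻ u in Ioc ((A:ℝ)) t, fpow ψ n u := setLIntegral_mono (fpow_meas hm n) hptw
      _ ≤ ∫⁻ u in Ioi ((A:ℝ)), fpow ψ n u := lintegral_mono_set (fun u hu => hu.1)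
      _ = ν (Ioi ((A:ℝ))) := (happ _ measurableSet_Ioi).symm
      _ ≤ ENNReal.ofReal (ε/2) := hA.le
  have hm_le : (∫⁻ u in Ioc 0 t, F u) ≤ ENNReal.ofReal ε := by
    calc (∫⁻ u in Ioc 0 t, F u)
        = ∫⁻ u, (Ioc 0 t).indicator F u := (lintegral_indicator measurableSet_Ioc _).symm
      _ ≤ ∫⁻ u, ((Ioc 0 ((A:ℝ))).indicator F u + (Ioc ((A:ℝ)) t).indicator F u) :=
          lintegral_mono hsub
      _ = (∫⁻ u, (Ioc 0 ((A:ℝ))).indicator F u) + ∫⁻ u, (Ioc ((A:ℝ)) t).indicator F u :=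
          lintegral_add_left (hFmeas.indicator measurableSet_Ioc) _
      _ = (∫⁻ u in Ioc 0 ((A:ℝ)), F u) + ∫⁻ u in Ioc ((A:ℝ)) t, F u := by
          rw [lintegral_indicator measurableSet_Ioc, lintegral_indicator measurableSet_Ioc]
      _ ≤ ENNReal.ofReal (Real.exp (-(α₀ * (t - (A:ℝ))) / 2)) + ENNReal.ofReal (ε/2) :=
          add_le_add hbound1 hbound2
      _ ≤ ENNReal.ofReal (ε/2) + ENNReal.ofReal (ε/2) :=
          add_le_add (ENNReal.ofReal_le_ofReal hexpt.le) le_rfl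
      _ = ENNReal.ofReal ε := by
          rw [← ENNReal.ofReal_add (by positivity) (by positivity)]
          congr 1
          ring
  exact ENNReal.toReal_le_of_le_ofReal hε.le hm_le

end mth

end Stmt9Aux

open Stmt9Aux

set_option maxHeartbeats 2000000 in
/-- **supercritical case, weighted sums.** In the supercritical setting, with
`α₀ > 0` the unique root of `∫₀^∞ e^{-α₀ t} φ t dt = 1`, if `(η_n)_{n≥1}` is a real sequence
tending to `0`, then `e^{-α₀ t} ∑_{n≥1} η_n ∫₀ᵗ φ^{⋆n}(t-s) e^{α₀ s/2} ds → 0` as `t → ∞`.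
(Here `η (n : ℕ)` stands for `η_{n+1}` and `convPow φ n` for `φ^{⋆(n+1)}`.) -/
theorem stmt9 (φ : ℝ → ℝ)
    (hφmeas : Measurable φ)
    (hφ0 : ∀ t : ℝ, 0 ≤ t → 0 ≤ φ t)
    (hΛ : 1 < ∫⁻ s in Ioi (0:ℝ), ENNReal.ofReal (φ s))
    (hφvar : ∃ C : ℝ, 0 < C ∧ ∃ p : ℝ, 0 < p ∧
      ∀ t : ℝ, 0 ≤ t → eVariationOn φ (Icc 0 t) ≤ ENNReal.ofReal (C * (1 + t) ^ p))
    (α₀ : ℝ) (hα₀ : 0 < α₀)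
    (hroot : (∫ t in Ioi (0:ℝ), Real.exp (-(α₀ * t)) * φ t) = 1)
    (η : ℕ → ℝ) (hη : Tendsto η atTop (𝓝 0)) :
    Tendsto (fun t : ℝ =>
        Real.exp (-(α₀ * t)) *
          ∑' n : ℕ, η n * ∫ s in (0:ℝ)..t, convPow φ n (t - s) * Real.exp (α₀ * s / 2))
      atTop (𝓝 0) := by
  classical
  have hψm : Measurable (psi φ α₀) := psi_meas hφmeas
  have hψs : ∀ x ≤ 0, psi φ α₀ x = 0 := psi_supp
  have hψmass : ∫⁻ x, psi φ α₀ x = 1 := psi_mass hφmeas hφ0 hroot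
  obtain ⟨δ, hδ, hq⟩ := small_tail hψm hψs hψmass
  set m : ℕ → ℝ → ℝ≥0∞ := fun n t => ∫⁻ u in Ioc 0 t,
    fpow (psi φ α₀) n u * ENNReal.ofReal (Real.exp (-(α₀ * (t - u)) / 2)) with hmdef
  set c := ENNReal.ofReal (Real.exp (-(α₀ * δ) / 2)) with hc
  have hclt : c < 1 := by
    rw [hc]
    refine ENNReal.ofReal_lt_one.2 ?_
    rw [← Real.exp_zero]
    refine Real.exp_lt_exp.2 ?_
    have : 0 < α₀ * δ := mul_pos hα₀ hδ
    linarith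
  set Mtot := (1 - c)⁻¹ * (1 - ∫⁻ x in Iic δ, psi φ α₀ x)⁻¹ with hMtotdef
  have hMtot_ne : Mtot ≠ ∞ := by
    refine ENNReal.mul_ne_top ?_ ?_
    · exact ENNReal.inv_ne_top.2 fun h => absurd (tsub_eq_zero_iff_le.1 h) hclt.not_ge
    · refine ENNReal.inv_ne_top.2 fun h => ?_
      have := tsub_eq_zero_iff_le.1 h
      have hlt : (∫⁻ x in Iic δ, psi φ α₀ x) < 1 :=
        lt_of_le_of_lt hq (by norm_num)
      exact absurd this hlt.not_ge
  have hmsum : ∀ t, ∑' n, m n t ≤ Mtot := fun t => msum hψm hψs hψmass hα₀ hδ t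
  have hmne : ∀ t n, m n t ≠ ∞ := fun t n =>
    ne_top_of_le_ne_top ENNReal.one_ne_top (mle1 hψm hψmass hα₀ n t)
  have hsumne : ∀ t, (∑' n, m n t) ≠ ∞ := fun t => ne_top_of_le_ne_top hMtot_ne (hmsum t)
  have hSummable : ∀ t, Summable (fun n => (m n t).toReal) := fun t =>
    ENNReal.summable_toReal (hsumne t)
  set Mr := Mtot.toReal with hMr
  have htsum_le : ∀ t, ∑' n, (m n t).toReal ≤ Mr := by
    intro t
    rw [← ENNReal.tsum_toReal_eq (fun n => hmne t n)]
    exact ENNReal.toReal_mono hMtot_ne (hmsum t)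
  have hτnn : ∀ n t, 0 ≤ (m n t).toReal := fun n t => ENNReal.toReal_nonneg
  have hGeq : (fun t : ℝ => Real.exp (-(α₀ * t)) *
        ∑' n : ℕ, η n * ∫ s in (0:ℝ)..t, convPow φ n (t - s) * Real.exp (α₀ * s / 2))
      =ᶠ[atTop] (fun t : ℝ => ∑' n : ℕ, η n * (m n t).toReal) := by
    filter_upwards [eventually_ge_atTop (0:ℝ)] with t ht
    rw [← tsum_mul_left]
    refine tsum_congr fun n => ?_
    rw [← mul_assoc, mul_comm (Real.exp (-(α₀ * t))) (η n), mul_assoc]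
    congr 1
    exact bridge hφmeas hφ0 hψmass n ht
  refine Filter.Tendsto.congr' hGeq.symm ?_
  rw [Metric.tendsto_atTop]
  intro ε hε
  have hηabs : Tendsto (fun n => |η n|) atTop (𝓝 0) := by simpa using hη.abs
  obtain ⟨B, hB⟩ := hηabs.bddAbove_range
  have hBmem : ∀ n, |η n| ≤ B := fun n => hB (Set.mem_range_self n)
  have hB0 : 0 ≤ B := le_trans (abs_nonneg _) (hBmem 0)
  have hMr0 : 0 ≤ Mr := ENNReal.toReal_nonneg
  set ε' := ε / (4 * (Mr + 1)) with hε'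
  have hε'pos : 0 < ε' := by positivity
  obtain ⟨N, hN⟩ := Metric.tendsto_atTop.1 hη ε' hε'pos
  have hNsmall : ∀ n, N ≤ n → |η n| ≤ ε' := fun n hn => by
    have := hN n hn
    rw [Real.dist_eq, sub_zero] at this
    exact this.le
  set ε2 := ε / (4 * ((N:ℝ) + 1) * (B + 1)) with hε2
  have hε2pos : 0 < ε2 := by positivity
  have hfinN : ∀ᶠ t in (atTop : Filter ℝ), ∀ n ∈ Finset.range N, (m n t).toReal ≤ ε2 :=
    (Filter.eventually_all_finset _).2 fun n _ => mdecay hψm hψmass hα₀ n hε2pos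
  obtain ⟨T, hT⟩ := eventually_atTop.1 hfinN
  refine ⟨T, fun t htT => ?_⟩
  have h_small := hT t htT
  -- summability facts
  have habs_sum : Summable (fun n => |η n| * (m n t).toReal) := by
    refine Summable.of_nonneg_of_le (fun n => mul_nonneg (abs_nonneg _) (hτnn n t))
      (fun n => mul_le_mul_of_nonneg_right (hBmem n) (hτnn n t)) ?_
    exact (hSummable t).mul_left B
  have hsum_t : Summable (fun n => η n * (m n t).toReal) := by
    refine Summable.of_abs ?_
    have : ∀ n, |η n * (m n t).toReal| = |η n| * (m n t).toReal := fun n => by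
      rw [abs_mul, abs_of_nonneg (hτnn n t)]
    simpa [this] using habs_sum
  have hGt : |∑' n, η n * (m n t).toReal| ≤ ∑' n, |η n| * (m n t).toReal := by
    simpa [abs_mul, abs_of_nonneg (ENNReal.toReal_nonneg)] using
      norm_tsum_le_tsum_norm (f := fun n => η n * (m n t).toReal)
        (by simpa [abs_mul, abs_of_nonneg (ENNReal.toReal_nonneg)] using habs_sum)
  have hsplit : (∑' n, |η n| * (m n t).toReal)
      = (∑ n ∈ Finset.range N, |η n| * (m n t).toReal)
        + ∑' k, |η (k + N)| * (m (k + N) t).toReal :=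
    (Summable.sum_add_tsum_nat_add N habs_sum).symm
  -- first part
  have hA1 : (∑ n ∈ Finset.range N, |η n| * (m n t).toReal) ≤ ε / 4 := by
    have hterm : ∀ n ∈ Finset.range N, |η n| * (m n t).toReal ≤ B * ε2 := by
      intro n hn
      exact mul_le_mul (hBmem n) (h_small n hn) (hτnn n t) hB0
    calc (∑ n ∈ Finset.range N, |η n| * (m n t).toReal)
        ≤ ∑ _n ∈ Finset.range N, B * ε2 := Finset.sum_le_sum hterm
      _ = (N:ℝ) * (B * ε2) := by rw [Finset.sum_const, Finset.card_range, nsmul_eq_mul]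
      _ ≤ ε / 4 := by
          rw [hε2]
          have h1 : (N:ℝ) * B ≤ ((N:ℝ)+1) * (B+1) := by nlinarith [Nat.cast_nonneg (α := ℝ) N]
          have h2 : (0:ℝ) < ((N:ℝ)+1) * (B+1) := by positivity
          calc (N:ℝ) * (B * (ε / (4 * ((N:ℝ) + 1) * (B + 1))))
              = ((N:ℝ) * B) * (ε / (4 * (((N:ℝ)+1) * (B+1)))) := by ring_nf
            _ ≤ (((N:ℝ)+1) * (B+1)) * (ε / (4 * (((N:ℝ)+1) * (B+1)))) :=
                mul_le_mul_of_nonneg_right h1 (by positivity)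
            _ = ε / 4 := by
                field_simp
  -- second part
  have hshift_sum : Summable (fun k => (m (k + N) t).toReal) :=
    (summable_nat_add_iff N).2 (hSummable t)
  have hshift_abs : Summable (fun k => |η (k + N)| * (m (k + N) t).toReal) :=
    (summable_nat_add_iff N).2 habs_sum
  have hA2 : (∑' k, |η (k + N)| * (m (k + N) t).toReal) ≤ ε / 4 := by
    have hstep : (∑' k, |η (k + N)| * (m (k + N) t).toReal)
        ≤ ∑' k, ε' * (m (k + N) t).toReal := by
      refine Summable.tsum_le_tsum (fun k => ?_) hshift_abs (hshift_sum.mul_left ε')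
      exact mul_le_mul_of_nonneg_right (hNsmall (k + N) (Nat.le_add_left N k)) (hτnn _ t)
    have htail : (∑' k, (m (k + N) t).toReal) ≤ Mr := by
      have := Summable.sum_add_tsum_nat_add N (hSummable t)
      have hfirst : 0 ≤ ∑ n ∈ Finset.range N, (m n t).toReal :=
        Finset.sum_nonneg fun n _ => hτnn n t
      have := htsum_le t
      linarith [Summable.sum_add_tsum_nat_add N (hSummable t)]
    calc (∑' k, |η (k + N)| * (m (k + N) t).toReal)
        ≤ ∑' k, ε' * (m (k + N) t).toReal := hstep
      _ = ε' * ∑' k, (m (k + N) t).toReal := tsum_mul_left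
      _ ≤ ε' * Mr := mul_le_mul_of_nonneg_left htail hε'pos.le
      _ ≤ ε / 4 := by
          rw [hε']
          have h1 : Mr ≤ Mr + 1 := by linarith
          have h2 : (0:ℝ) < Mr + 1 := by linarith
          calc ε / (4 * (Mr + 1)) * Mr ≤ ε / (4 * (Mr + 1)) * (Mr + 1) :=
              mul_le_mul_of_nonneg_left h1 (by positivity)
            _ = ε / 4 := by field_simp
  rw [Real.dist_eq, sub_zero]
  calc |∑' n, η n * (m n t).toReal| ≤ ∑' n, |η n| * (m n t).toReal := hGt
    _ = _ + _ := hsplit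
    _ ≤ ε / 4 + ε / 4 := add_le_add hA1 hA2
    _ < ε := by linarith
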